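/- arXiv:2309.00577 — 3 statements merged into one kernel-verified Lean document; each statement's English description precedes it below -/
import Mathlib

section
/- Let G be a group equipped with a bi-invariant metric d. Two elements g, h ∈ G are non-adjacent (i.e. there exists k ∈ G with k ≠ g, k ≠ h, and d(g,h) = d(g,k) + d(k,h)) if and only if there exist factorizations g = g₀g₁ and h = h₀h₁ such that g₀ ≠ h₀, g₁ ≠ h₁, and d(g,h) = d(g₀,h₀) + d(g₁,h₁). -/
/-- In a group with a bi-invariant metric, `g` and `h` are non-adjacent iff
they factor as `g = g₀ * g₁`, `h = h₀ * h₁` with `g₀ ≠ h₀`, `g₁ ≠ h₁` and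
`d g h = d g₀ h₀ + d g₁ h₁`. -/
theorem stmt4 {G : Type*} [Group G] (d : G → G → ℝ)
    (h_self : ∀ x, d x x = 0)
    (h_sep : ∀ x y : G, d x y = 0 → x = y)
    (h_symm : ∀ x y : G, d x y = d y x)
    (h_tri : ∀ x y z : G, d x z ≤ d x y + d y z)
    (h_left : ∀ g x y : G, d (g * x) (g * y) = d x y)
    (h_right : ∀ g x y : G, d (x * g) (y * g) = d x y)
    (g h : G) :
    (∃ k : G, k ≠ g ∧ k ≠ h ∧ d g h = d g k + d k h) ↔
      (∃ g₀ g₁ h₀ h₁ : G, g = g₀ * g₁ ∧ h = h₀ * h₁ ∧ g₀ ≠ h₀ ∧ g₁ ≠ h₁ ∧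
        d g h = d g₀ h₀ + d g₁ h₁) := by
  constructor
  · rintro ⟨k, hkg, hkh, hd⟩
    refine ⟨g * k⁻¹, k, 1, h, by group, by group, ?_, hkh, ?_⟩
    · intro he
      apply hkg
      have : g * k⁻¹ * k = 1 * k := by rw [he]
      simpa using this.symm
    · have : d (g * k⁻¹) 1 = d g k := by
        have := h_right k (g * k⁻¹) 1
        simpa using this.symm
      rw [this, hd]
  · rintro ⟨g₀, g₁, h₀, h₁, hg, hh, h01, h02, hd⟩
    refine ⟨h₀ * g₁, ?_, ?_, ?_⟩
    · intro he; apply h01; rw [hg] at he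
      exact (mul_right_cancel he).symm
    · intro he; apply h02; rw [hh] at he
      exact mul_left_cancel he
    · rw [hg, hh, h_right g₁ g₀ h₀, h_left h₀ g₁ h₁, ← hg, ← hh, hd]
end

section
/- Let G be a group with a conjugation-invariant norm and associated bi-invariant metric d. Let A be the free abelian group on the set of ordered pairs (g,h) of adjacent distinct elements of G with d(g,h) = ℓ, for a fixed ℓ > 0. Define φ(g,h) = gh⁻¹. Then φ induces a bijection between: equivalence classes of such pairs under the relations (g₀,h₀) ∼ (g₀k, h₀k) and (g₁,h₁) ∼ (kg₁, kh₁) for k ∈ G, and conjugacy classes of indecomposable elements of norm ℓ in G. -/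
/-- For a group `G` with a conjugation-invariant norm and associated bi-invariant metric
`d g h = |h⁻¹g|`, and `ℓ > 0`: the map `φ(g,h) = g h⁻¹` induces a bijection between
equivalence classes of adjacent pairs at distance `ℓ` (under simultaneous right- and
left-translation) and conjugacy classes of indecomposable elements of norm `ℓ`. -/
theorem stmt17 {G : Type*} [Group G] (N : G → ℝ)
    (h_one : N 1 = 0)
    (h_pos : ∀ g : G, g ≠ 1 → 0 < N g)
    (h_mul : ∀ g h : G, N (g * h) ≤ N g + N h)
    (h_conj : ∀ g h : G, N (g * h * g⁻¹) = N h)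
    (ℓ : ℝ) (hℓ : 0 < ℓ) :
    let d : G → G → ℝ := fun x y => N (y⁻¹ * x)
    let Adjacent : G → G → Prop :=
      fun x y => ¬ ∃ z : G, z ≠ x ∧ z ≠ y ∧ d x y = d x z + d z y
    let Indec : G → Prop :=
      fun x => x ≠ 1 ∧ ∀ k : G, k ≠ 1 → k ≠ x → N x < N (k⁻¹ * x) + N k
    ∀ (R1 : {p : G × G // p.1 ≠ p.2 ∧ Adjacent p.1 p.2 ∧ d p.1 p.2 = ℓ} →
            {p : G × G // p.1 ≠ p.2 ∧ Adjacent p.1 p.2 ∧ d p.1 p.2 = ℓ} → Prop)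
      (R2 : {x : G // Indec x ∧ N x = ℓ} → {x : G // Indec x ∧ N x = ℓ} → Prop),
      (∀ p q, R1 p q ↔ ((∃ k : G, q.val = (p.val.1 * k, p.val.2 * k)) ∨
          (∃ k : G, q.val = (k * p.val.1, k * p.val.2)))) →
      (∀ a b, R2 a b ↔ ∃ k : G, b.val = k * a.val * k⁻¹) →
      ∃ Φ : Quot R1 → Quot R2, Function.Bijective Φ ∧
        ∀ p q, p.val.1 * p.val.2⁻¹ = q.val → Φ (Quot.mk R1 p) = Quot.mk R2 q := by
  intro d Adjacent Indec R1 R2 hR1 hR2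
  -- basic facts
  have hswap : ∀ a b : G, N (a * b) = N (b * a) := by
    intro a b
    have := h_conj a (b * a)
    rw [show a * (b * a) * a⁻¹ = a * b by group] at this
    exact this
  have dr : ∀ g h k : G, d (g * k) (h * k) = d g h := by
    intro g h k
    show N ((h * k)⁻¹ * (g * k)) = N (h⁻¹ * g)
    rw [show (h * k)⁻¹ * (g * k) = k⁻¹ * (h⁻¹ * g) * (k⁻¹)⁻¹ by group]
    exact h_conj k⁻¹ _
  have dl : ∀ g h k : G, d (k * g) (k * h) = d g h := by
    intro g h k
    show N ((k * h)⁻¹ * (k * g)) = N (h⁻¹ * g)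
    rw [show (k * h)⁻¹ * (k * g) = h⁻¹ * g by group]
  -- translation invariance of the pair property
  have prop_l : ∀ g h k : G, (g ≠ h ∧ Adjacent g h ∧ d g h = ℓ) →
      (k * g ≠ k * h ∧ Adjacent (k * g) (k * h) ∧ d (k * g) (k * h) = ℓ) := by
    rintro g h k ⟨hne, hadj, hd⟩
    refine ⟨by simpa using hne, ?_, by rw [dl]; exact hd⟩
    rintro ⟨z, hz1, hz2, heq⟩
    refine hadj ⟨k⁻¹ * z, ?_, ?_, ?_⟩
    · intro hzz; apply hz1; rw [← hzz]; group
    · intro hzz; apply hz2; rw [← hzz]; group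
    · have e1 : d (k * g) z = d g (k⁻¹ * z) := by
        rw [← dl g (k⁻¹ * z) k]; congr 1; group
    
      have e2 : d z (k * h) = d (k⁻¹ * z) h := by
        rw [← dl (k⁻¹ * z) h k]; congr 1; group
      rw [← e1, ← e2, ← dl g h k]; exact heq
  -- forward map is well-defined on representatives
  have key : ∀ p : {p : G × G // p.1 ≠ p.2 ∧ Adjacent p.1 p.2 ∧ d p.1 p.2 = ℓ},
      Indec (p.val.1 * p.val.2⁻¹) ∧ N (p.val.1 * p.val.2⁻¹) = ℓ := by
    rintro ⟨⟨g, h⟩, hne, hadj, hd⟩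
    have hdN : N (h⁻¹ * g) = ℓ := hd
    have hx : N (g * h⁻¹) = ℓ := by rw [hswap]; exact hdN
    refine ⟨⟨?_, ?_⟩, hx⟩
    · intro h1
      exact hne (by rwa [mul_inv_eq_one] at h1)
    · intro k hk1 hkx
      have tri : N (g * h⁻¹) ≤ N (k⁻¹ * (g * h⁻¹)) + N k := by
        have := h_mul k (k⁻¹ * (g * h⁻¹))
        rw [mul_inv_cancel_left] at this
        linarith
    
      rcases lt_or_eq_of_le tri with hlt | heq
      · exact hlt
      · exfalso
        apply hadj
        refine ⟨k⁻¹ * g, ?_, ?_, ?_⟩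
        · intro hz
          have hk : k⁻¹ = 1 := mul_right_cancel (hz.trans (one_mul g).symm)
          exact hk1 (inv_eq_one.mp hk)
        · intro hz
          have hz' : k⁻¹ * g = h := hz
          apply hkx
          show k = g * h⁻¹
          rw [← hz']; group
        · show N (h⁻¹ * g) = N ((k⁻¹ * g)⁻¹ * g) + N (h⁻¹ * (k⁻¹ * g))
          have e1 : N ((k⁻¹ * g)⁻¹ * g) = N k := by
            rw [show (k⁻¹ * g)⁻¹ * g = g⁻¹ * k * (g⁻¹)⁻¹ by group]
            exact h_conj g⁻¹ k
          have e2 : N (h⁻¹ * (k⁻¹ * g)) = N (k⁻¹ * (g * h⁻¹)) := by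
            rw [hswap h⁻¹ (k⁻¹ * g), mul_assoc]
          rw [e1, e2, hswap h⁻¹ g, heq]
          ring
  -- backward map is well-defined on representatives
  have key2 : ∀ x : {x : G // Indec x ∧ N x = ℓ},
      ((x.val, (1:G)) : G × G).1 ≠ ((x.val, (1:G)) : G × G).2 ∧
        Adjacent x.val 1 ∧ d x.val 1 = ℓ := by
    rintro ⟨x, ⟨hx1, hxind⟩, hxN⟩
    refine ⟨hx1, ?_, by show N (1⁻¹ * x) = ℓ; rwa [inv_one, one_mul]⟩
    rintro ⟨z, hz1, hz2, heq⟩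
    have heq' : N x = N (z⁻¹ * x) + N z := by
      have h1 : d x (1:G) = N x := by show N (1⁻¹ * x) = N x; rw [inv_one, one_mul]
      have h2 : d z (1:G) = N z := by show N (1⁻¹ * z) = N z; rw [inv_one, one_mul]
      rw [h1, h2] at heq
      exact heq
    exact absurd heq' (ne_of_lt (hxind z hz2 hz1))
  -- the maps
  set f : {p : G × G // p.1 ≠ p.2 ∧ Adjacent p.1 p.2 ∧ d p.1 p.2 = ℓ} →
      {x : G // Indec x ∧ N x = ℓ} := fun p => ⟨p.val.1 * p.val.2⁻¹, key p⟩ with hf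
  set g : {x : G // Indec x ∧ N x = ℓ} →
      {p : G × G // p.1 ≠ p.2 ∧ Adjacent p.1 p.2 ∧ d p.1 p.2 = ℓ} :=
    fun x => ⟨(x.val, 1), key2 x⟩ with hg
  have hΦsound : ∀ p q, R1 p q → Quot.mk R2 (f p) = Quot.mk R2 (f q) := by
    intro p q hpq
    rcases (hR1 p q).mp hpq with ⟨k, hk⟩ | ⟨k, hk⟩
    · have : f p = f q := by
        apply Subtype.ext
        show p.val.1 * p.val.2⁻¹ = q.val.1 * q.val.2⁻¹
        rw [hk]; group
      rw [this]
    · apply Quot.sound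
      apply (hR2 _ _).mpr
      refine ⟨k, ?_⟩
      show q.val.1 * q.val.2⁻¹ = k * (p.val.1 * p.val.2⁻¹) * k⁻¹
      rw [hk]
      show (k * p.val.1) * (k * p.val.2)⁻¹ = k * (p.val.1 * p.val.2⁻¹) * k⁻¹
      group
  have hΨsound : ∀ a b, R2 a b → Quot.mk R1 (g a) = Quot.mk R1 (g b) := by
    intro a b hab
    rcases (hR2 a b).mp hab with ⟨k, hk⟩
    have pm := prop_l a.val 1 k (key2 a)
    rw [mul_one] at pm
    have s1 : Quot.mk R1 (g a) =
        Quot.mk R1 ⟨(k * a.val, k), pm⟩ := by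
      apply Quot.sound
      apply (hR1 _ _).mpr
      right
      refine ⟨k, ?_⟩
      show ((k * a.val, k) : G × G) = (k * a.val, k * 1)
      rw [mul_one]
    have s2 : Quot.mk R1 (⟨(k * a.val, k), pm⟩ :
        {p : G × G // p.1 ≠ p.2 ∧ Adjacent p.1 p.2 ∧ d p.1 p.2 = ℓ}) = Quot.mk R1 (g b) := by
      apply Quot.sound
      apply (hR1 _ _).mpr
      left
      refine ⟨k⁻¹, ?_⟩
      show (b.val, (1:G)) = (k * a.val * k⁻¹, k * k⁻¹)
      rw [hk, mul_inv_cancel]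
    exact s1.trans s2
  refine ⟨Quot.lift (fun p => Quot.mk R2 (f p)) hΦsound, ?_, ?_⟩
  · apply Function.bijective_iff_has_inverse.mpr
    refine ⟨Quot.lift (fun x => Quot.mk R1 (g x)) hΨsound, ?_, ?_⟩
    · -- left inverse
      apply Quot.ind
      intro p
      show Quot.mk R1 (g (f p)) = Quot.mk R1 p
      apply Quot.sound
      apply (hR1 _ _).mpr
      left
      refine ⟨p.val.2, ?_⟩
      show p.val = (p.val.1 * p.val.2⁻¹ * p.val.2, 1 * p.val.2)
      rw [inv_mul_cancel_right, one_mul]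
    · -- right inverse
      apply Quot.ind
      intro x
      show Quot.mk R2 (f (g x)) = Quot.mk R2 x
      congr 1
      apply Subtype.ext
      show x.val * (1:G)⁻¹ = x.val
      rw [inv_one, mul_one]
  · intro p q hpq
    show Quot.mk R2 (f p) = Quot.mk R2 q
    congr 1
    exact Subtype.ext hpq
end

section
/- Let X be a metric space (d separated, possibly non-symmetric, values in [0,∞]). For ℓ > 0, the first magnitude homology group MH_1^ℓ(X) of the magnitude chain complex — where MC_n^ℓ(X) is the free abelian group on tuples (x₀,…,xₙ) with consecutive entries distinct and total length Σ d(xᵢ,xᵢ₊₁) = ℓ, with boundary ∂ = Σᵢ₌₁ⁿ⁻¹ (−1)ⁱ δᵢ where δᵢ deletes xᵢ if it is between its neighbours and is 0 otherwise — is the free abelian group on ordered pairs (x,y) of distinct adjacent points with d(x,y) = ℓ. -/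
open scoped ENNReal

/-- Index set of magnitude 1-chains in grading `ℓ`: pairs of distinct points with
`d x y = ℓ`. -/
def MagT1 {X : Type*} (d : X → X → ℝ≥0∞) (ℓ : ℝ≥0∞) : Type _ :=
  {p : X × X // p.1 ≠ p.2 ∧ d p.1 p.2 = ℓ}

/-- Index set of magnitude 2-chains in grading `ℓ`: triples with consecutive entries
distinct and total length `ℓ`. -/
def MagT2 {X : Type*} (d : X → X → ℝ≥0∞) (ℓ : ℝ≥0∞) : Type _ :=
  {t : X × X × X // t.1 ≠ t.2.1 ∧ t.2.1 ≠ t.2.2 ∧ d t.1 t.2.1 + d t.2.1 t.2.2 = ℓ}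

/-- The value of the magnitude boundary `∂₂ = -δ₁` on a generating triple `(x,y,z)`:
`-(x,z)` if `y` is between `x` and `z`, and `0` otherwise. -/
noncomputable def magDelta1Gen {X : Type*} (d : X → X → ℝ≥0∞)
    (h_self : ∀ x, d x x = 0) (h_sep : ∀ x y : X, d x y = 0 → x = y)
    (ℓ : ℝ≥0∞) (t : MagT2 d ℓ) : MagT1 d ℓ →₀ ℤ :=
  if hb : d t.val.1 t.val.2.2 = d t.val.1 t.val.2.1 + d t.val.2.1 t.val.2.2 then
    Finsupp.single ⟨(t.val.1, t.val.2.2), by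
      constructor
      · intro h
        have h0 : d t.val.1 t.val.2.2 = 0 := by rw [h]; exact h_self _
        rw [h0] at hb
        exact t.prop.1 (h_sep _ _ (add_eq_zero.mp hb.symm).1)
      · rw [hb]; exact t.prop.2.2⟩ (-1)
  else 0

/-- The magnitude boundary map `∂₂ : MC₂^ℓ → MC₁^ℓ` on free abelian groups. -/
noncomputable def magBoundary2 {X : Type*} (d : X → X → ℝ≥0∞)
    (h_self : ∀ x, d x x = 0) (h_sep : ∀ x y : X, d x y = 0 → x = y)
    (ℓ : ℝ≥0∞) : (MagT2 d ℓ →₀ ℤ) →ₗ[ℤ] (MagT1 d ℓ →₀ ℤ) :=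
  Finsupp.lift (MagT1 d ℓ →₀ ℤ) ℤ (MagT2 d ℓ) (magDelta1Gen d h_self h_sep ℓ)

lemma single_mem_span_single {α : Type*} (S : Set α) (q : α) (hq : q ∈ S) (c : ℤ) :
    Finsupp.single q c ∈
      Submodule.span ℤ ((fun i => Finsupp.single i (1 : ℤ)) '' S) := by
  have := Submodule.smul_mem
    (Submodule.span ℤ ((fun i => Finsupp.single i (1 : ℤ)) '' S)) c
    (Submodule.subset_span ⟨q, hq, rfl⟩)
  simpa using this

/-- Leinster–Shulman: for a (possibly non-symmetric) metric space `X` and `ℓ > 0`,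
the first magnitude homology `MH₁^ℓ(X) = MC₁^ℓ / im ∂₂` (note `∂₁ = 0`) is the free
abelian group on ordered pairs of distinct *adjacent* points at distance `ℓ`. -/
theorem stmt19 {X : Type*} (d : X → X → ℝ≥0∞)
    (h_self : ∀ x, d x x = 0)
    (h_sep : ∀ x y : X, d x y = 0 → x = y)
    (h_tri : ∀ x y z : X, d x z ≤ d x y + d y z)
    (ℓ : ℝ≥0∞) (hℓ0 : 0 < ℓ) (hℓtop : ℓ ≠ ⊤) :
    Nonempty (((MagT1 d ℓ →₀ ℤ) ⧸ LinearMap.range (magBoundary2 d h_self h_sep ℓ)) ≃ₗ[ℤ]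
      ({p : X × X // p.1 ≠ p.2 ∧ d p.1 p.2 = ℓ ∧
        ¬ ∃ z : X, z ≠ p.1 ∧ z ≠ p.2 ∧ d p.1 p.2 = d p.1 z + d z p.2} →₀ ℤ)) := by
  classical
  -- the set of adjacent generators
  set A : Set (MagT1 d ℓ) :=
    {q | ¬ ∃ z : X, z ≠ q.val.1 ∧ z ≠ q.val.2 ∧
      d q.val.1 q.val.2 = d q.val.1 z + d z q.val.2} with hA
  -- restriction map to adjacent generators
  let φ : (MagT1 d ℓ →₀ ℤ) →ₗ[ℤ] (A →₀ ℤ) := Finsupp.lsubtypeDomain A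
  have hφsurj : Function.Surjective φ := by
    intro g
    refine ⟨Finsupp.embDomain (Function.Embedding.subtype _) g, ?_⟩
    ext a
    simpa [φ, Finsupp.lsubtypeDomain_apply, Finsupp.subtypeDomain_apply] using
      Finsupp.embDomain_apply_self (Function.Embedding.subtype (· ∈ A)) g a
  -- identify the range of ∂₂ with the kernel of φ
  have hkey : LinearMap.range (magBoundary2 d h_self h_sep ℓ) = LinearMap.ker φ := by
    have h1 : magBoundary2 d h_self h_sep ℓ =
        Finsupp.linearCombination ℤ (magDelta1Gen d h_self h_sep ℓ) := rfl
    have h2 : LinearMap.ker φ =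
        Finsupp.supported ℤ ℤ Aᶜ := by
      ext f
      simp only [LinearMap.mem_ker, φ, Finsupp.lsubtypeDomain_apply,
        Finsupp.mem_supported']
      rw [Finsupp.subtypeDomain_eq_zero_iff']
      constructor
      · intro h x hx
        exact h x (by simpa using hx)
      · intro h x hx
        exact h x (by simpa using hx)
    rw [h1, h2, Finsupp.range_linearCombination, Finsupp.supported_eq_span_single]
    apply le_antisymm
    · rw [Submodule.span_le]
      rintro _ ⟨t, rfl⟩
      rw [magDelta1Gen]
      split_ifs with hb
      · apply single_mem_span_single
        simp only [Set.mem_compl_iff, hA, Set.mem_setOf_eq, not_not]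
        exact fun h => h ⟨t.val.2.1, Ne.symm t.prop.1, t.prop.2.1, hb⟩
      · exact Submodule.zero_mem _
    · rw [Submodule.span_le]
      rintro _ ⟨q, hq, rfl⟩
      simp only [Set.mem_compl_iff, hA, Set.mem_setOf_eq, not_not] at hq
      obtain ⟨z, hzx, hzy, hbet⟩ := hq
      have hxz : q.val.1 ≠ z := Ne.symm hzx
      have hzy2 : z ≠ q.val.2 := hzy
      have hsum : d q.val.1 z + d z q.val.2 = ℓ := by
        rw [← hbet]; exact q.prop.2
      set t : MagT2 d ℓ := ⟨(q.val.1, z, q.val.2), hxz, hzy2, hsum⟩ with ht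
      have hval : magDelta1Gen d h_self h_sep ℓ t = Finsupp.single q (-1) := by
        rw [magDelta1Gen]
        rw [dif_pos (by simpa [ht] using hbet)]
        congr 1
      have hmem : magDelta1Gen d h_self h_sep ℓ t ∈
          Submodule.span ℤ (Set.range (magDelta1Gen d h_self h_sep ℓ)) :=
        Submodule.subset_span ⟨t, rfl⟩
      have h2 := Submodule.smul_mem _ (-1 : ℤ) hmem
      rw [hval, Finsupp.smul_single, smul_eq_mul] at h2
      norm_num at h2
      simpa using h2
  -- the equivalence between the index sets
  let e : A ≃ {p : X × X // p.1 ≠ p.2 ∧ d p.1 p.2 = ℓ ∧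
      ¬ ∃ z : X, z ≠ p.1 ∧ z ≠ p.2 ∧ d p.1 p.2 = d p.1 z + d z p.2} :=
    { toFun := fun q => ⟨q.val.val, q.val.prop.1, q.val.prop.2, q.prop⟩
      invFun := fun p => ⟨⟨p.val, p.prop.1, p.prop.2.1⟩, p.prop.2.2⟩
      left_inv := fun q => rfl
      right_inv := fun p => rfl }
  rw [hkey]
  exact ⟨(φ.quotKerEquivOfSurjective hφsurj).trans (Finsupp.domLCongr e)⟩
end
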